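/- Let K be a class of L-algebras, C a smallest finite subalgebra of F_K(ω), and K' a class of L-algebras such that for all finite sets Σ of equations, Σ is K-unifiable iff Σ is K'-satisfiable. Then |C| ≤ |B| for every B ∈ K'. -/

import Mathlib

/-- An algebraic signature: a type of operation symbols with arities. -/
structure Signature where
  ops : Type
  arity : ops → ℕ

/-- An algebra for a signature `S`. -/
structure Alg (S : Signature) where
  carrier : Type
  interp : ∀ o : S.ops, (Fin (S.arity o) → carrier) → carrier

/-- Terms over a set `X` of variables. -/
inductive Term (S : Signature) (X : Type) : Type where
  | var : X → Term S X
  | op : (o : S.ops) → (Fin (S.arity o) → Term S X) → Term S X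

variable {S : Signature}

/-- Evaluation of a term in an algebra under an assignment of variables. -/
def Term.eval {X : Type} (A : Alg S) (h : X → A.carrier) : Term S X → A.carrier
  | .var x => h x
  | .op o args => A.interp o (fun i => (args i).eval A h)

/-- Application of a substitution to a term. -/
def Term.subst (σ : ℕ → Term S ℕ) : Term S ℕ → Term S ℕ
  | .var x => σ x
  | .op o args => .op o (fun i => (args i).subst σ)

/-- Homomorphisms of algebras. -/
def IsHom (A B : Alg S) (f : A.carrier → B.carrier) : Prop :=
  ∀ (o : S.ops) (args : Fin (S.arity o) → A.carrier),
    f (A.interp o args) = B.interp o (fun i => f (args i))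

/-- Embeddings of algebras: injective homomorphisms. -/
def IsEmbedding (A B : Alg S) (f : A.carrier → B.carrier) : Prop :=
  IsHom A B f ∧ Function.Injective f

/-- `A` embeds into `B` (i.e. `A` is isomorphic to a subalgebra of `B`). -/
def Embeds (A B : Alg S) : Prop := ∃ f, IsEmbedding A B f

/-- Isomorphism of algebras. -/
def Iso (A B : Alg S) : Prop := ∃ f, IsHom A B f ∧ Function.Bijective f

/-- Product of a family of algebras. -/
def ProdAlg {I : Type} (F : I → Alg S) : Alg S where
  carrier := ∀ i, (F i).carrier
  interp o args i := (F i).interp o (fun j => args j i)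

/-- Binary product of algebras. -/
def Alg.prod (A B : Alg S) : Alg S where
  carrier := A.carrier × B.carrier
  interp o args := (A.interp o (fun i => (args i).1), B.interp o (fun i => (args i).2))

/-- `A` is a subdirect product of the family `F`: there is an embedding of `A`
into the product whose composition with each projection is surjective. -/
def IsSubdirectProduct (A : Alg S) {I : Type} (F : I → Alg S) : Prop :=
  ∃ f : A.carrier → (ProdAlg F).carrier,
    IsEmbedding A (ProdAlg F) f ∧ ∀ i, Function.Surjective (fun a => f a i)

/-- An equation: an ordered pair of terms. -/
abbrev Eqn (S : Signature) (X : Type) := Term S X × Term S X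

/-- An equation holds in an algebra. -/
def Alg.SatisfiesEqn {X : Type} (A : Alg S) (e : Eqn S X) : Prop :=
  ∀ h : X → A.carrier, e.1.eval A h = e.2.eval A h

/-- An equation is valid in a class of algebras. -/
def EqValid (K : Set (Alg S)) (e : Eqn S ℕ) : Prop := ∀ A ∈ K, A.SatisfiesEqn e

/-- A quasiequation: finitely many premises and one conclusion. -/
structure Quasieq (S : Signature) where
  prem : List (Eqn S ℕ)
  concl : Eqn S ℕ

/-- A quasiequation holds in an algebra. -/
def Alg.SatisfiesQ (A : Alg S) (q : Quasieq S) : Prop :=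
  ∀ h : ℕ → A.carrier,
    (∀ e ∈ q.prem, e.1.eval A h = e.2.eval A h) →
      q.concl.1.eval A h = q.concl.2.eval A h

/-- The quasivariety generated by `K`: the class axiomatized by all
quasiequations valid in `K`. -/
def QGen (K : Set (Alg S)) : Set (Alg S) :=
  { A | ∀ q : Quasieq S, (∀ B ∈ K, B.SatisfiesQ q) → A.SatisfiesQ q }

/-- The variety generated by `K`: the class axiomatized by all
equations valid in `K`. -/
def VGen (K : Set (Alg S)) : Set (Alg S) :=
  { A | ∀ e : Eqn S ℕ, (∀ B ∈ K, B.SatisfiesEqn e) → A.SatisfiesEqn e }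

/-- A quasivariety is a class axiomatizable by quasiequations. -/
def IsQuasivariety (Q : Set (Alg S)) : Prop := QGen Q = Q

/-- `A` is `Q`-subdirectly irreducible: `A ∈ Q` and for every `Q`-subdirect
representation of `A`, `A` is isomorphic to one of the components. -/
def QSubdirectlyIrreducible (Q : Set (Alg S)) (A : Alg S) : Prop :=
  A ∈ Q ∧ ∀ (I : Type) (F : I → Alg S), (∀ i, F i ∈ Q) →
    IsSubdirectProduct A F → ∃ i, Iso A (F i)

/-- A congruence on an algebra. -/
structure Cong (A : Alg S) where
  r : A.carrier → A.carrier → Prop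
  iseqv : Equivalence r
  compat : ∀ (o : S.ops) (a b : Fin (S.arity o) → A.carrier),
    (∀ i, r (a i) (b i)) → r (A.interp o a) (A.interp o b)

def Cong.setoid {A : Alg S} (θ : Cong A) : Setoid A.carrier := ⟨θ.r, θ.iseqv⟩

/-- Quotient algebra of `A` by a congruence `θ`. -/
noncomputable def QuotAlg (A : Alg S) (θ : Cong A) : Alg S where
  carrier := Quotient θ.setoid
  interp o args := Quotient.mk θ.setoid (A.interp o (fun i => (args i).out))

/-- The term algebra over variables `X`. -/
def TermAlg (S : Signature) (X : Type) : Alg S where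
  carrier := Term S X
  interp := Term.op

/-- The congruence of all identifications valid in `K` on the term algebra:
the intersection of all congruences whose quotient embeds into a member of `K`. -/
def freeCong (K : Set (Alg S)) (X : Type) : Cong (TermAlg S X) where
  r φ ψ := ∀ A ∈ K, ∀ h : X → A.carrier, φ.eval A h = ψ.eval A h
  iseqv := by
    constructor
    · intro φ A hA h; rfl
    · intro φ ψ H A hA h; exact (H A hA h).symm
    · intro a b c H1 H2 A hA h; exact (H1 A hA h).trans (H2 A hA h)
  compat := by
    intro o a b hab A hA h
    show Term.eval A h (Term.op o a) = Term.eval A h (Term.op o b)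
    simp only [Term.eval]
    congr 1
    funext i
    exact hab i A hA h

/-- The free algebra of `K` over variables `X`. -/
noncomputable def FreeAlg (K : Set (Alg S)) (X : Type) : Alg S :=
  QuotAlg (TermAlg S X) (freeCong K X)

/-- `σ` is a `K`-unifier of the finite set of equations `Γ`. -/
def Unifier (K : Set (Alg S)) (σ : ℕ → Term S ℕ) (Γ : List (Eqn S ℕ)) : Prop :=
  ∀ e ∈ Γ, EqValid K (e.1.subst σ, e.2.subst σ)

/-- `Γ` is `K`-unifiable. -/
def Unifiable (K : Set (Alg S)) (Γ : List (Eqn S ℕ)) : Prop := ∃ σ, Unifier K σ Γ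

/-- The quasiequation `Γ ⇒ e` is `K`-admissible: every `K`-unifier of the
premises unifies the conclusion. -/
def Admissible (K : Set (Alg S)) (Γ : List (Eqn S ℕ)) (e : Eqn S ℕ) : Prop :=
  ∀ σ, Unifier K σ Γ → EqValid K (e.1.subst σ, e.2.subst σ)

/-- The quasiequation `Γ ⇒ e` is valid in the class `K` (`Γ ⊨_K e`). -/
def Models (K : Set (Alg S)) (Γ : List (Eqn S ℕ)) (e : Eqn S ℕ) : Prop :=
  ∀ A ∈ K, ∀ h : ℕ → A.carrier,
    (∀ e' ∈ Γ, e'.1.eval A h = e'.2.eval A h) → e.1.eval A h = e.2.eval A h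

/-- `Γ` is satisfiable in the algebra `A`. -/
def SatIn (A : Alg S) (Γ : List (Eqn S ℕ)) : Prop :=
  ∃ h : ℕ → A.carrier, ∀ e ∈ Γ, e.1.eval A h = e.2.eval A h

section Stmt11Aux

variable {S : Signature}

theorem Stmt11.eval_subst (A : Alg S) (σ : ℕ → Term S ℕ) (h : ℕ → A.carrier) :
    ∀ t : Term S ℕ, (t.subst σ).eval A h = t.eval A (fun n => (σ n).eval A h)
  | .var _ => rfl
  | .op o args => by
      simp only [Term.subst, Term.eval]
      congr 1
      funext i
      exact Stmt11.eval_subst A σ h (args i)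

theorem Stmt11.subst_subst (σ τ : ℕ → Term S ℕ) :
    ∀ t : Term S ℕ, (t.subst σ).subst τ = t.subst (fun n => (σ n).subst τ)
  | .var _ => rfl
  | .op o args => by
      simp only [Term.subst]
      congr 1
      funext i
      exact Stmt11.subst_subst σ τ (args i)

theorem Stmt11.eval_hom {A B : Alg S} {f : A.carrier → B.carrier} (hf : IsHom A B f)
    {X : Type} (h : X → A.carrier) :
    ∀ t : Term S X, t.eval B (fun x => f (h x)) = f (t.eval A h)
  | .var _ => rfl
  | .op o args => by
      simp only [Term.eval]
      have IH : (fun i => Term.eval B (fun x => f (h x)) (args i))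
          = fun i => f (Term.eval A h (args i)) :=
        funext fun i => Stmt11.eval_hom hf h (args i)
      rw [IH]
      exact (hf o _).symm

theorem Stmt11.mk_op (K : Set (Alg S)) (o : S.ops) (args : Fin (S.arity o) → Term S ℕ) :
    (FreeAlg K ℕ).interp o (fun i => Quotient.mk (freeCong K ℕ).setoid (args i))
      = Quotient.mk (freeCong K ℕ).setoid (Term.op o args) := by
  apply Quotient.sound
  apply (freeCong K ℕ).compat
  intro i
  have h := Quotient.out_eq (Quotient.mk (freeCong K ℕ).setoid (args i))
  exact Quotient.exact h

theorem Stmt11.eval_mk (K : Set (Alg S)) (σ : ℕ → Term S ℕ) :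
    ∀ t : Term S ℕ,
      t.eval (FreeAlg K ℕ) (fun n => Quotient.mk (freeCong K ℕ).setoid (σ n))
        = Quotient.mk (freeCong K ℕ).setoid (t.subst σ)
  | .var _ => rfl
  | .op o args => by
      have IH : (fun i => Term.eval (FreeAlg K ℕ)
            (fun n => Quotient.mk (freeCong K ℕ).setoid (σ n)) (args i))
          = fun i => Quotient.mk (freeCong K ℕ).setoid ((args i).subst σ) :=
        funext fun i => Stmt11.eval_mk K σ (args i)
      show (FreeAlg K ℕ).interp o (fun i => Term.eval (FreeAlg K ℕ)
            (fun n => Quotient.mk (freeCong K ℕ).setoid (σ n)) (args i))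
          = Quotient.mk (freeCong K ℕ).setoid (Term.op o (fun i => (args i).subst σ))
      rw [IH]
      exact Stmt11.mk_op K o _

theorem Stmt11.subst_mem_range (K : Set (Alg S)) {C : Alg S}
    {e : C.carrier → (FreeAlg K ℕ).carrier} (he : IsEmbedding C (FreeAlg K ℕ) e)
    {t0 : Term S ℕ} {c0 : C.carrier} (h0 : e c0 = Quotient.mk (freeCong K ℕ).setoid t0) :
    ∀ t : Term S ℕ,
      Quotient.mk (freeCong K ℕ).setoid (t.subst (fun _ => t0)) ∈ Set.range e
  | .var _ => ⟨c0, h0⟩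
  | .op o args => by
      show Quotient.mk (freeCong K ℕ).setoid (Term.op o (fun i => (args i).subst (fun _ => t0))) ∈ _
      rw [← Stmt11.mk_op K o (fun i => (args i).subst (fun _ => t0))]
      have := fun i => Stmt11.subst_mem_range K he h0 (args i)
      choose c hc using this
      refine ⟨C.interp o c, ?_⟩
      rw [he.1 o]
      congr 1
      funext i
      exact hc i

/-- unifiability implies satisfiability in a nonempty finite subalgebra of the free algebra. -/
theorem Stmt11.satC (K : Set (Alg S)) {C : Alg S} (hemb : Embeds C (FreeAlg K ℕ))
    (hne : Nonempty C.carrier) {Γ : List (Eqn S ℕ)} (hu : Unifiable K Γ) : SatIn C Γ := by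
  obtain ⟨e, he⟩ := hemb
  obtain ⟨σ, hσ⟩ := hu
  obtain ⟨c0⟩ := hne
  set t0 : Term S ℕ := (e c0).out with ht0
  have h0 : e c0 = Quotient.mk (freeCong K ℕ).setoid t0 := (Quotient.out_eq _).symm
  set σ' : ℕ → Term S ℕ := fun n => (σ n).subst (fun _ => t0) with hσ'
  have hr : ∀ n, Quotient.mk (freeCong K ℕ).setoid (σ' n) ∈ Set.range e :=
    fun n => Stmt11.subst_mem_range K he h0 (σ n)
  choose c' hc' using hr
  refine ⟨c', ?_⟩
  intro eq heq
  apply he.2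
  have key : ∀ t : Term S ℕ,
      e (t.eval C c') = Quotient.mk (freeCong K ℕ).setoid (t.subst σ') := by
    intro t
    rw [← Stmt11.eval_hom he.1 c' t]
    have hfun : (fun x => e (c' x)) = fun n => Quotient.mk (freeCong K ℕ).setoid (σ' n) :=
      funext fun n => hc' n
    rw [hfun]
    exact Stmt11.eval_mk K σ' t
  rw [key, key]
  apply Quotient.sound
  -- need: freeCong relates eq.1.subst σ' and eq.2.subst σ'
  intro A hA h
  have hval := hσ eq heq A hA (fun _ => Term.eval A h t0)
  have e1 : eq.1.subst σ' = (eq.1.subst σ).subst (fun _ => t0) :=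
    (Stmt11.subst_subst σ (fun _ => t0) eq.1).symm
  have e2 : eq.2.subst σ' = (eq.2.subst σ).subst (fun _ => t0) :=
    (Stmt11.subst_subst σ (fun _ => t0) eq.2).symm
  show Term.eval A h (Term.subst σ' eq.1) = Term.eval A h (Term.subst σ' eq.2)
  rw [e1, e2, Stmt11.eval_subst A (fun _ => t0) h (Term.subst σ eq.1),
    Stmt11.eval_subst A (fun _ => t0) h (Term.subst σ eq.2)]
  exact hval

end Stmt11Aux

open Classical in
/-- Key combinatorial step: given a nonempty finite `B ∈ K'`, the free algebra's
finite subalgebra `C` contains a nonempty subuniverse of size at most `|B|`. -/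
theorem Stmt11.exists_small_subuniverse {S : Signature} (K : Set (Alg S)) (C : Alg S)
    (hCemb : Embeds C (FreeAlg K ℕ)) (hCfin : Finite C.carrier)
    (hCne : Nonempty C.carrier)
    (K' : Set (Alg S))
    (hK' : ∀ Γ : List (Eqn S ℕ), Unifiable K Γ ↔ ∃ B ∈ K', SatIn B Γ)
    (B : Alg S) (hB : B ∈ K') (hBfin : Finite B.carrier) (hBne : Nonempty B.carrier) :
    ∃ D : Set C.carrier, D.Nonempty ∧ Nat.card D ≤ Nat.card B.carrier ∧
      ∀ (o : S.ops) (args : Fin (S.arity o) → C.carrier),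
        (∀ i, args i ∈ D) → C.interp o args ∈ D := by
  set m := Nat.card B.carrier with hm
  have hmpos : 0 < m := Nat.card_pos
  have eb : B.carrier ≃ Fin m := Finite.equivFin B.carrier
  -- the closure equations of B for an operation o
  set eqnFor : (o : S.ops) → (Fin (S.arity o) → Fin m) → Eqn S ℕ :=
    fun o τ => (Term.op o (fun i => Term.var (τ i : ℕ)),
      Term.var ((eb (B.interp o (fun i => eb.symm (τ i))) : Fin m) : ℕ)) with heqnFor
  set eqnsFor : S.ops → List (Eqn S ℕ) := fun o =>
    ((Finset.univ : Finset (Fin (S.arity o) → Fin m)).toList).map (eqnFor o) with heqnsFor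
  -- a subset fails to be a subuniverse
  set P : Set C.carrier → Prop := fun D => ∃ o : S.ops,
    ∃ args : Fin (S.arity o) → C.carrier, (∀ i, args i ∈ D) ∧ C.interp o args ∉ D with hP
  haveI : Finite C.carrier := hCfin
  haveI : Fintype C.carrier := Fintype.ofFinite _
  set Γ : List (Eqn S ℕ) :=
    ((Finset.univ : Finset (Set C.carrier)).toList).flatMap
      (fun D => if h : P D then eqnsFor h.choose else []) with hΓ
  -- B satisfies Γ
  set hB' : ℕ → B.carrier :=
    (fun n => if h : n < m then eb.symm ⟨n, h⟩ else eb.symm ⟨0, hmpos⟩) with hhB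
  have h1 : ∀ i : Fin m, hB' (i : ℕ) = eb.symm i := by
    intro i
    show (if h : (i : ℕ) < m then eb.symm ⟨(i : ℕ), h⟩ else eb.symm ⟨0, hmpos⟩) = eb.symm i
    rw [dif_pos i.isLt]
  have hsatB : SatIn B Γ := by
    refine ⟨hB', ?_⟩
    intro e he
    rw [hΓ, List.mem_flatMap] at he
    obtain ⟨D, -, heD⟩ := he
    by_cases hD : P D
    · rw [dif_pos hD, heqnsFor, List.mem_map] at heD
      obtain ⟨τ, -, rfl⟩ := heD
      show Term.eval B hB' _ = Term.eval B hB' _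
      simp only [heqnFor, Term.eval]
      have h2 : (fun i => hB' ((τ i : ℕ))) = fun i => eb.symm (τ i) :=
        funext fun i => h1 (τ i)
      rw [h2, h1 (eb (B.interp _ (fun i => eb.symm (τ i)))), Equiv.symm_apply_apply]
    · rw [dif_neg hD] at heD
      exact absurd heD List.not_mem_nil
  -- hence Γ is unifiable, hence satisfiable in C
  have hunif : Unifiable K Γ := (hK' Γ).mpr ⟨B, hB, hsatB⟩
  obtain ⟨h', hsat⟩ := Stmt11.satC K hCemb hCne hunif
  set D : Set C.carrier := Set.range (fun i : Fin m => h' (i : ℕ)) with hD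
  refine ⟨D, ⟨h' 0, ⟨⟨0, hmpos⟩, rfl⟩⟩, ?_, ?_⟩
  · calc Nat.card D ≤ Nat.card (Fin m) :=
          Nat.card_le_card_of_surjective _ Set.rangeFactorization_surjective
      _ = m := by simp
  · intro o args hargs
    by_contra hout
    have hPD : P D := ⟨o, args, hargs, hout⟩
    obtain ⟨args', hargs', hout'⟩ := hPD.choose_spec
    have hidx : ∀ i, ∃ j : Fin m, h' (j : ℕ) = args' i := fun i => hargs' i
    choose τ hτ using hidx
    have hmemΓ : eqnFor hPD.choose τ ∈ Γ := by
      rw [hΓ, List.mem_flatMap]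
      refine ⟨D, by simp, ?_⟩
      rw [dif_pos hPD, heqnsFor, List.mem_map]
      exact ⟨τ, by simp, rfl⟩
    have hthis := hsat _ hmemΓ
    simp only [heqnFor, Term.eval] at hthis
    have hargs'' : (fun i => h' ((τ i : ℕ))) = args' := funext hτ
    rw [hargs''] at hthis
    exact hout' (hthis ▸ ⟨_, rfl⟩)

/-- If `C` is a smallest finite subalgebra of `F_K(ω)` and `K'` is a class such
that `K`-unifiability coincides with `K'`-satisfiability, then `|C| ≤ |B|` for
every `B ∈ K'`. -/
theorem stmt11 {S : Signature} (K : Set (Alg S)) (C : Alg S)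
    (hCemb : Embeds C (FreeAlg K ℕ)) (hCfin : Finite C.carrier)
    (hmin : ∀ C' : Alg S, Embeds C' (FreeAlg K ℕ) → Finite C'.carrier →
      Nat.card C.carrier ≤ Nat.card C'.carrier)
    (K' : Set (Alg S))
    (hK' : ∀ Γ : List (Eqn S ℕ), Unifiable K Γ ↔ ∃ B ∈ K', SatIn B Γ) :
    ∀ B ∈ K', Cardinal.mk C.carrier ≤ Cardinal.mk B.carrier := by
  intro B hB
  haveI : Finite C.carrier := hCfin
  by_cases hCne : Nonempty C.carrier
  swap
  · haveI : IsEmpty C.carrier := not_nonempty_iff.mp hCne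
    simp [Cardinal.mk_eq_zero]
  by_cases hBne : Nonempty B.carrier
  swap
  · -- B is empty: B itself is a finite subalgebra of the free algebra,
    -- contradicting that C is nonempty and smallest
    haveI hBe : IsEmpty B.carrier := not_nonempty_iff.mp hBne
    exfalso
    have hembB : Embeds B (FreeAlg K ℕ) := by
      refine ⟨fun x => isEmptyElim x, ?_, fun a => isEmptyElim a⟩
      intro o args
      exact isEmptyElim (B.interp o args)
    have := hmin B hembB (by haveI := hBe; exact Finite.of_subsingleton)
    rw [Nat.card_of_isEmpty (α := B.carrier)] at this
    haveI := hCne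
    have hpos : 0 < Nat.card C.carrier := Nat.card_pos
    omega
  by_cases hBfin : Finite B.carrier
  swap
  · haveI : Infinite B.carrier := not_finite_iff_infinite.mp hBfin
    exact (Cardinal.lt_aleph0_of_finite C.carrier).le.trans (Cardinal.aleph0_le_mk B.carrier)
  -- main case: B nonempty finite
  obtain ⟨D, hDne, hDcard, hDclosed⟩ :=
    Stmt11.exists_small_subuniverse K C hCemb hCfin hCne K' hK' B hB hBfin hBne
  set AD : Alg S := ⟨D, fun o args => ⟨C.interp o (fun i => (args i : C.carrier)),
    hDclosed o _ (fun i => (args i).2)⟩⟩ with hAD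
  obtain ⟨e, he1, he2⟩ := hCemb
  have hembD : Embeds AD (FreeAlg K ℕ) := by
    refine ⟨fun d => e (d : C.carrier), ?_, ?_⟩
    · intro o args
      exact he1 o _
    · intro a b hab
      exact Subtype.ext (he2 hab)
  haveI : Finite D := Subtype.finite
  have hcard : Nat.card C.carrier ≤ Nat.card B.carrier :=
    (hmin AD hembD (by exact inferInstanceAs (Finite D))).trans hDcard
  have hC : (Cardinal.mk C.carrier) = ((Nat.card C.carrier : ℕ) : Cardinal) := by
    rw [Nat.card, Cardinal.cast_toNat_of_lt_aleph0 (Cardinal.lt_aleph0_of_finite _)]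
  haveI : Finite B.carrier := hBfin
  have hBc : (Cardinal.mk B.carrier) = ((Nat.card B.carrier : ℕ) : Cardinal) := by
    rw [Nat.card, Cardinal.cast_toNat_of_lt_aleph0 (Cardinal.lt_aleph0_of_finite _)]
  rw [hC, hBc]
  exact_mod_cast hcard
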